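/- Let q be an odd prime power, let (a,b) be a valid pair in F_q^2 with a ≠ b, and let ω = ω[a,b]. If the cycle of ω containing 0 is a transposition (i.e., ω(0) ≠ 0 and ω(ω(0)) = 0) or the cycle of ω containing a is a transposition (i.e., ω(a) ≠ a and ω(ω(a)) = a), then b ∈ {-a, 2-a, a/(2a-1)}. -/
import Mathlib


open scoped Classical
open Finset

noncomputable section

variable {F : Type*} [Field F] [Fintype F]

/-- `x ∈ R_q`: `x` is a nonzero square in `F`. -/
def inR (x : F) : Prop := x ≠ 0 ∧ IsSquare x

/-- `x ∈ N_q`: `x` is a nonzero non-square in `F`. -/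
def inN (x : F) : Prop := x ≠ 0 ∧ ¬ IsSquare x

/-- `(a, b)` is a valid pair: `ab ∈ R_q` and `(a-1)(b-1) ∈ R_q`. -/
def ValidPair (a b : F) : Prop := inR (a * b) ∧ inR ((a - 1) * (b - 1))

/-- The operation of the quadratic quasigroup `Q_{a,b}`:
`x*y = x + a(y-x)` if `y - x ∈ R_q`, `x*y = x + b(y-x)` if `y - x ∈ N_q`, and `x*x = x`. -/
def qmul (a b x y : F) : F :=
  if inR (y - x) then x + a * (y - x) else x + b * (y - x)

/-- The extended quadratic character `χ` of `F_q`. -/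
def chi (x : F) : ℤ := if x = 0 then 0 else if IsSquare x then 1 else -1

/-- The quadratic map `φ = φ[a,b]`: `φ(x) = ax` if `x ∈ R_q` and `φ(x) = bx` otherwise. -/
def phi (a b x : F) : F := if inR x then a * x else b * x

/-- `ω` satisfies `z = (z₀,z₁,z₂,z₃)` with `j`, where `φE` is the permutation induced by
`φ[a,b]`: `ω(ω(j)) = j`, `χ(j) = z₀`, `χ(φ⁻¹(j)-1) = z₁`, `χ(ω(j)) = z₂`, and
`χ(φ⁻¹(ω(j))-1) = z₃`. -/
def SatisfiesWith (ω φE : Equiv.Perm F) (z : ℤ × ℤ × ℤ × ℤ) (j : F) : Prop :=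
  ω (ω j) = j ∧ chi j = z.1 ∧ chi (φE.symm j - 1) = z.2.1 ∧
    chi (ω j) = z.2.2.1 ∧ chi (φE.symm (ω j) - 1) = z.2.2.2

/-- `ω` satisfies `z` if it satisfies `z` with some `j ∈ F_q`. -/
def Satisfies (ω φE : Equiv.Perm F) (z : ℤ × ℤ × ℤ × ℤ) : Prop :=
  ∃ j : F, SatisfiesWith ω φE z j

/-- `phi a b x` is always `d * x` for some `d ∈ {a, b}`. -/
lemma phi_form (a b x : F) : ∃ d : F, (d = a ∨ d = b) ∧ phi a b x = d * x := by
  unfold phi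
  split
  · exact ⟨a, Or.inl rfl, rfl⟩
  · exact ⟨b, Or.inr rfl, rfl⟩

/-- The inverse of the permutation induced by `phi` always divides by `a` or `b`. -/
lemma symm_form {a b : F} (ha : a ≠ 0) (hb : b ≠ 0) (φE : Equiv.Perm F)
    (hφ : ∀ x : F, φE x = phi a b x) (y : F) :
    ∃ d : F, (d = a ∨ d = b) ∧ φE.symm y = y / d := by
  obtain ⟨d, hd, hdx⟩ := phi_form a b (φE.symm y)
  have happ : φE (φE.symm y) = y := φE.apply_symm_apply y
  rw [hφ, hdx] at happ
  have hd0 : d ≠ 0 := by rcases hd with rfl | rfl <;> assumption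
  exact ⟨d, hd, by rw [eq_div_iff hd0]; linear_combination happ⟩

/-- Solving the transposition-at-zero equation. -/
lemma key1 {a b c d e : F} (ha : a ≠ 0) (hb : b ≠ 0) (ha1 : a ≠ 1) (hb1 : b ≠ 1)
    (h2 : (2 : F) ≠ 0)
    (hc : c = a ∨ c = b) (hd : d = a ∨ d = b) (he : e = a ∨ e = b)
    (heq : 1 + e * ((1 - c) / d - 1) = 0) :
    b = -a ∨ b = 2 - a ∨ b = a / (2 * a - 1) := by
  have hd0 : d ≠ 0 := by rcases hd with rfl | rfl <;> assumption
  have H : d + e * (1 - c) - e * d = 0 := by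
    have h' : (1 - c) / d * d = 1 - c := div_mul_cancel₀ _ hd0
    linear_combination d * heq - e * h'
  clear heq
  rcases hc with h | h <;> rcases hd with h' | h' <;> rcases he with h'' | h'' <;>
    rw [h, h', h''] at H
  · -- c=a, d=a, e=a : 2a(1-a)=0 contradiction
    exfalso
    have : (2 : F) * a * (1 - a) = 0 := by linear_combination H
    rcases mul_eq_zero.mp this with h | h
    · rcases mul_eq_zero.mp h with h | h
      · exact h2 h
      · exact ha h
    · exact ha1 (by linear_combination -h)
  · -- c=a, d=a, e=b : b = a/(2a-1)
    right; right
    have h2a : 2 * a - 1 ≠ 0 := by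
      intro h0
      exact ha (by linear_combination H + b * h0)
    rw [eq_div_iff h2a]; linear_combination -H
  · -- c=a, d=b, e=a : b = -a
    left
    have : (b + a) * (1 - a) = 0 := by linear_combination H
    rcases mul_eq_zero.mp this with h | h
    · linear_combination h
    · exact absurd (by linear_combination -h) ha1
  · -- c=a, d=b, e=b : b = 2 - a
    right; left
    have : b * (2 - a - b) = 0 := by linear_combination H
    rcases mul_eq_zero.mp this with h | h
    · exact absurd h hb
    · linear_combination -h
  · -- c=b, d=a, e=a : b = 2 - a
    right; left
    have : a * (2 - a - b) = 0 := by linear_combination H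
    rcases mul_eq_zero.mp this with h | h
    · exact absurd h ha
    · linear_combination -h
  · -- c=b, d=a, e=b : b = -a
    left
    have : (b + a) * (1 - b) = 0 := by linear_combination H
    rcases mul_eq_zero.mp this with h | h
    · linear_combination h
    · exact absurd (by linear_combination -h) hb1
  · -- c=b, d=b, e=a : b = a/(2a-1)
    right; right
    have h2a : 2 * a - 1 ≠ 0 := by
      intro h0
      exact ha (by linear_combination H + b * h0)
    rw [eq_div_iff h2a]; linear_combination -H
  · -- c=b, d=b, e=b : 2b(1-b)=0 contradiction
    exfalso
    have : (2 : F) * b * (1 - b) = 0 := by linear_combination H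
    rcases mul_eq_zero.mp this with h | h
    · rcases mul_eq_zero.mp h with h | h
      · exact h2 h
      · exact hb h
    · exact hb1 (by linear_combination -h)

/-- Solving the transposition-at-`a` equation. -/
lemma key2 {a b d e : F} (ha : a ≠ 0) (hb : b ≠ 0) (ha1 : a ≠ 1) (hb1 : b ≠ 1)
    (h2 : (2 : F) ≠ 0)
    (hd : d = a ∨ d = b) (he : e = a ∨ e = b)
    (heq : 1 + d * (1 / e - 1) = a) :
    b = -a ∨ b = 2 - a ∨ b = a / (2 * a - 1) := by
  have he0 : e ≠ 0 := by rcases he with rfl | rfl <;> assumption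
  have H : e + d * (1 - e) - a * e = 0 := by
    have h' : (1 : F) / e * e = 1 := div_mul_cancel₀ _ he0
    linear_combination e * heq - d * h'
  clear heq
  rcases hd with h | h <;> rcases he with h' | h' <;> rw [h, h'] at H
  · exfalso
    have : (2 : F) * a * (1 - a) = 0 := by linear_combination H
    rcases mul_eq_zero.mp this with h | h
    · rcases mul_eq_zero.mp h with h | h
      · exact h2 h
      · exact ha h
    · exact ha1 (by linear_combination -h)
  · right; right
    have h2a : 2 * a - 1 ≠ 0 := by
      intro h0
      exact ha (by linear_combination H + b * h0)
    rw [eq_div_iff h2a]; linear_combination -H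
  · left
    have : (b + a) * (1 - a) = 0 := by linear_combination H
    rcases mul_eq_zero.mp this with h | h
    · linear_combination h
    · exact absurd (by linear_combination -h) ha1
  · right; left
    have : b * (2 - a - b) = 0 := by linear_combination H
    rcases mul_eq_zero.mp this with h | h
    · exact absurd h hb
    · linear_combination -h

/-- Lemma 2.11: if the cycle of `ω = ω[a,b]` containing `0` or the cycle containing `a`
is a transposition, then `b ∈ {-a, 2-a, a/(2a-1)}`. -/
theorem transposition_at_zero_or_a
    (hodd : Odd (Fintype.card F)) (a b : F) (hv : ValidPair a b) (hab : a ≠ b)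
    (φE ω : Equiv.Perm F)
    (hφ : ∀ x : F, φE x = phi a b x)
    (hω : ∀ x : F, ω x = 1 + φE (φE.symm x - 1))
    (h : (ω 0 ≠ 0 ∧ ω (ω 0) = 0) ∨ (ω a ≠ a ∧ ω (ω a) = a)) :
    b = -a ∨ b = 2 - a ∨ b = a / (2 * a - 1) := by
  have ha : a ≠ 0 := fun h0 => hv.1.1 (by rw [h0, zero_mul])
  have hb : b ≠ 0 := fun h0 => hv.1.1 (by rw [h0, mul_zero])
  have ha1 : a ≠ 1 := fun h0 => hv.2.1 (by rw [h0, sub_self, zero_mul])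
  have hb1 : b ≠ 1 := fun h0 => hv.2.1 (by rw [h0, sub_self, mul_zero])
  have hchar : ringChar F ≠ 2 := by
    intro hc
    have hcard := FiniteField.even_card_of_char_two hc
    rcases hodd with ⟨k, hk⟩
    omega
  have h2 : (2 : F) ≠ 0 := Ring.two_ne_zero hchar
  have hφ0 : φE 0 = 0 := by
    rw [hφ]; simp [phi, inR]
  have hs0 : φE.symm 0 = 0 := by
    rw [Equiv.symm_apply_eq]; exact hφ0.symm
  rcases h with ⟨-, heq⟩ | ⟨-, heq⟩
  · -- transposition at 0
    obtain ⟨c, hc, hcx⟩ := phi_form a b (-1 : F)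
    have hω0 : ω 0 = 1 - c := by
      rw [hω, hs0, zero_sub, hφ, hcx]; ring
    rw [hω0, hω, hφ] at heq
    obtain ⟨d, hd, hdx⟩ := symm_form ha hb φE hφ (1 - c)
    rw [hdx] at heq
    obtain ⟨e, he, hex⟩ := phi_form a b ((1 - c) / d - 1)
    rw [hex] at heq
    exact key1 ha hb ha1 hb1 h2 hc hd he heq
  · -- transposition at a
    have hφ1 : φE 1 = a := by
      rw [hφ]; simp [phi, inR]
    have hsa : φE.symm a = 1 := by
      rw [Equiv.symm_apply_eq]; exact hφ1.symm
    have hωa : ω a = 1 := by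
      rw [hω, hsa, sub_self, hφ0, add_zero]
    rw [hωa, hω, hφ] at heq
    obtain ⟨e, he, hex⟩ := symm_form ha hb φE hφ (1 : F)
    rw [hex] at heq
    obtain ⟨d, hd, hdx⟩ := phi_form a b (1 / e - 1)
    rw [hdx] at heq
    exact key2 ha hb ha1 hb1 h2 hd he heq
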